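/- Flow completeness for a single domain: for any domain d : D, the net change of the balance at d over a list of events is determined only by the events involving d; precisely, if L and L' are lists of treasury events (each with src ≠ dst) such that the multiset of events e ∈ L with e.src = d or e.dst = d equals the corresponding multiset for L', then for every initial balance vector B : D → ℤ, the final balances at d after folding step over L and over L' are equal. -/

import Mathlib

/-- A treasury event: a transfer of value `v` from domain `src` to domain `dst`. -/
structure Event (D : Type*) where
  src : D
  dst : D
  v : ℤ

/-- Balance-update rule: processing event `e` subtracts `e.v` from the source domain,
adds `e.v` to the destination domain, and leaves all other domains unchanged. -/
def step {D : Type*} [DecidableEq D] (B : D → ℤ) (e : Event D) : D → ℤ :=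
  fun d => if d = e.src then B d - e.v else if d = e.dst then B d + e.v else B d

/-- The net effect of an event on domain `d`. -/
def delta {D : Type*} [DecidableEq D] (d : D) (e : Event D) : ℤ :=
  (if d = e.src then -e.v else 0) + (if d = e.dst then e.v else 0)

lemma step_eq_add_delta {D : Type*} [DecidableEq D] (B : D → ℤ) (e : Event D)
    (h : e.src ≠ e.dst) (d : D) : step B e d = B d + delta d e := by
  unfold step delta
  by_cases h1 : d = e.src
  · subst h1; simp [h]; ring
  · by_cases h2 : d = e.dst
    · subst h2; simp [Ne.symm h]
    · simp [h1, h2]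

lemma foldl_step_eq {D : Type*} [DecidableEq D] (d : D) (L : List (Event D))
    (hL : ∀ e ∈ L, e.src ≠ e.dst) (B : D → ℤ) :
    (L.foldl step B) d = B d + (L.map (delta d)).sum := by
  induction L generalizing B with
  | nil => simp
  | cons e t ih =>
      simp only [List.foldl_cons, List.map_cons, List.sum_cons]
      rw [ih (fun x hx => hL x (List.mem_cons_of_mem _ hx)),
        step_eq_add_delta B e (hL e List.mem_cons_self)]
      ring

lemma sum_delta_filter {D : Type*} [DecidableEq D] (d : D) (L : List (Event D)) :
    (L.map (delta d)).sum
      = ((L.filter (fun e => decide (e.src = d ∨ e.dst = d))).map (delta d)).sum := by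
  induction L with
  | nil => simp
  | cons e t ih =>
      by_cases h : e.src = d ∨ e.dst = d
      · simp [List.filter_cons, h, ih]
      · push_neg at h
        have hd : delta d e = 0 := by
          simp [delta, Ne.symm h.1, Ne.symm h.2]
        simp [List.filter_cons, h.1, h.2, hd, ih]

theorem flow_completeness_single_domain {D : Type*} [DecidableEq D]
    (d : D) (L L' : List (Event D))
    (hL : ∀ e ∈ L, e.src ≠ e.dst)
    (hL' : ∀ e ∈ L', e.src ≠ e.dst)
    (hmulti :
      ((L.filter (fun e => decide (e.src = d ∨ e.dst = d))) : Multiset (Event D))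
        = ((L'.filter (fun e => decide (e.src = d ∨ e.dst = d))) : Multiset (Event D))) :
    ∀ B : D → ℤ, (L.foldl step B) d = (L'.foldl step B) d := by
  intro B
  rw [foldl_step_eq d L hL B, foldl_step_eq d L' hL' B,
    sum_delta_filter d L, sum_delta_filter d L']
  congr 1
  have := congrArg (fun m : Multiset (Event D) => (m.map (delta d)).sum) hmulti
  simpa using this
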